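/- Suppose 0 < Z_SD < Z_SR and Z_RD > 0, S > 0. Define t2max = C(Z_SR·S) / ( C(Z_SR·S) + C((Z_SD + Z_RD)·S) − C(Z_SD·S) ) and, for t2 ∈ [0, t2max] with t1 = 1 − t2, define F(t2) = t1·log( (1 + Z_SD·S) / ( 1 + (Z_SD/Z_SR)·[ (1 + Z_RD·S/(1 + Z_SD·S))^{t2/t1} − 1 ] ) ) + t2·C((Z_SD + Z_RD)·S). Then the supremum of x1 + x2 + x3 over all feasible tuples (t1, t2, α, x1, x2, x3) of the three-node flow optimization problem equals the maximum of F(t2) over t2 ∈ [0, t2max]. -/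

import Mathlib

open Real

/-- Shannon-type capacity function `C(x) = log (1 + x)` (natural logarithm). -/
noncomputable def capC (x : ℝ) : ℝ := Real.log (1 + x)

/-- Feasibility of a tuple `(t1, t2, α, x1, x2, x3)` for the three-node
flow optimization problem with link gains `ZSD, ZSR, ZRD` and transmit SNR `S`. -/
def Feasible (ZSD ZSR ZRD S t1 t2 α x1 x2 x3 : ℝ) : Prop :=
  0 ≤ t1 ∧ 0 ≤ t2 ∧ t1 + t2 = 1 ∧ 0 ≤ α ∧ α ≤ 1 ∧
  0 ≤ x1 ∧ 0 ≤ x2 ∧ 0 ≤ x3 ∧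
  x2 ≤ t2 * capC (ZRD * S) ∧
  x3 ≤ t2 * capC (ZSD * S) ∧
  x2 + x3 ≤ t2 * capC ((ZSD + ZRD) * S) ∧
  (ZSR ≤ ZSD →
    x1 ≤ t1 * capC (ZSD * α * S) ∧
    x2 ≤ t1 * capC (ZSR * (1 - α) * S / (1 + ZSR * α * S))) ∧
  (ZSD < ZSR →
    x1 ≤ t1 * capC (ZSD * α * S / (1 + ZSD * (1 - α) * S)) ∧
    x2 ≤ t1 * capC (ZSR * (1 - α) * S))

set_option linter.unreachableTactic false
set_option linter.unusedTactic false
set_option maxHeartbeats 1000000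

noncomputable def Fform (ZSD ZSR ZRD S t : ℝ) : ℝ :=
  (1 - t) * Real.log ((1 + ZSD * S) /
      (1 + (ZSD / ZSR) * ((1 + ZRD * S / (1 + ZSD * S)) ^ (t / (1 - t)) - 1)))
    + t * capC ((ZSD + ZRD) * S)

section
variable (ZSD ZSR ZRD S : ℝ) (hZSD : 0 < ZSD) (hZ : ZSD < ZSR) (hZRD : 0 < ZRD) (hS : 0 < S)

include hZSD hZ hZRD hS in
lemma L_eq : capC ((ZSD + ZRD) * S) - capC (ZSD * S)
    = Real.log (1 + ZRD * S / (1 + ZSD * S)) := by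
  unfold capC
  rw [← Real.log_div (by nlinarith) (by nlinarith)]
  congr 1
  have h : (1 : ℝ) + ZSD * S ≠ 0 := by nlinarith
  field_simp
  ring

include hZSD hZ hZRD hS in
lemma L_pos : 0 < Real.log (1 + ZRD * S / (1 + ZSD * S)) := by
  apply Real.log_pos
  have : 0 < ZRD * S / (1 + ZSD * S) := by positivity
  linarith

include hZSD hZ hZRD hS in
lemma cS_pos : 0 < capC (ZSR * S) := Real.log_pos (by nlinarith)

include hZSD hZ hZRD hS in
lemma construct (t2max : ℝ)
    (ht2max : t2max = capC (ZSR * S) /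
      (capC (ZSR * S) + capC ((ZSD + ZRD) * S) - capC (ZSD * S)))
    (t : ℝ) (ht : t ∈ Set.Icc 0 t2max) :
    ∃ α x1 x2 x3, Feasible ZSD ZSR ZRD S (1 - t) t α x1 x2 x3 ∧
      x1 + x2 + x3 = Fform ZSD ZSR ZRD S t := by
  set r : ℝ := 1 + ZRD * S / (1 + ZSD * S) with hrdef
  set cS : ℝ := capC (ZSR * S) with hcSdef
  set L : ℝ := Real.log r with hLdef2
  have hLval : capC ((ZSD + ZRD) * S) - capC (ZSD * S) = L := L_eq ZSD ZSR ZRD S hZSD hZ hZRD hS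
  have hL : 0 < L := L_pos ZSD ZSR ZRD S hZSD hZ hZRD hS
  have hcS : 0 < cS := cS_pos ZSD ZSR ZRD S hZSD hZ hZRD hS
  have hr1 : (1 : ℝ) < r := by
    have : 0 < ZRD * S / (1 + ZSD * S) := by positivity
    simp only [hrdef]; linarith
  have hr0 : (0 : ℝ) < r := by linarith
  have htm : t2max = cS / (cS + L) := by rw [ht2max]; rw [hcSdef]; rw [← hLval]; ring_nf
  have htm1 : t2max < 1 := by
    rw [htm, div_lt_one (by linarith)]; linarith
  have ht0 : 0 ≤ t := ht.1
  have ht2 : t ≤ t2max := ht.2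
  have ht1p : 0 < 1 - t := by linarith
  -- exponent
  set e : ℝ := t / (1 - t) with hedef
  have he0 : 0 ≤ e := by positivity
  have heL : e * L ≤ cS := by
    have h1 : t * (cS + L) ≤ cS := by
      have := mul_le_mul_of_nonneg_right ht2 (le_of_lt (show (0:ℝ) < cS + L by linarith))
      rw [htm, div_mul_cancel₀ _ (by linarith : cS + L ≠ 0)] at this
      exact this
    rw [hedef, div_mul_eq_mul_div, div_le_iff₀ ht1p]
    nlinarith
  set ρ : ℝ := r ^ e with hρdef
  have hρexp : ρ = Real.exp (L * e) := Real.rpow_def_of_pos hr0 e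
  have hρ1 : 1 ≤ ρ := by
    rw [hρexp]
    calc (1:ℝ) = Real.exp 0 := by simp
    _ ≤ _ := Real.exp_le_exp.2 (by nlinarith)
  have hρle : ρ ≤ 1 + ZSR * S := by
    rw [hρexp]
    have : Real.exp (L * e) ≤ Real.exp cS := Real.exp_le_exp.2 (by nlinarith)
    rw [hcSdef] at this
    unfold capC at this
    rwa [Real.exp_log (by nlinarith)] at this
  have hlogρ : Real.log ρ = e * L := Real.log_rpow hr0 e
  -- alpha
  set α : ℝ := 1 - (ρ - 1) / (ZSR * S) with hαdef
  have hZSRS : 0 < ZSR * S := by nlinarith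
  have hα1 : α ≤ 1 := by
    have h : 0 ≤ (ρ - 1) / (ZSR * S) := div_nonneg (by linarith) hZSRS.le
    rw [hαdef]; linarith
  have hα0 : 0 ≤ α := by
    rw [hαdef]
    have : (ρ - 1) / (ZSR * S) ≤ 1 := by
      rw [div_le_one hZSRS]; linarith
    linarith
  have hZSRne : ZSR ≠ 0 := ne_of_gt (by linarith)
  have h1α : ZSR * (1 - α) * S = ρ - 1 := by
    rw [hαdef]; field_simp; ring
  have h1αZSD : ZSD * (1 - α) * S = (ZSD / ZSR) * (ρ - 1) := by
    rw [hαdef]; field_simp; ring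
  -- x values
  set c3 : ℝ := capC (ZSD * S) with hc3def
  set Csum : ℝ := capC ((ZSD + ZRD) * S) with hCsumdef
  have hc3 : 0 < c3 := Real.log_pos (by nlinarith)
  refine ⟨α, (1 - t) * capC (ZSD * α * S / (1 + ZSD * (1 - α) * S)), t * L, t * c3, ?_, ?_⟩
  · refine ⟨by linarith, ht0, by ring, hα0, hα1, ?_, ?_, ?_, ?_, ?_, ?_, ?_, ?_⟩
    · apply mul_nonneg (by linarith)
      unfold capC
      apply Real.log_nonneg
      have h1 : 0 ≤ ZSD * α * S := by positivity
      have h2 : 0 < 1 + ZSD * (1 - α) * S := by nlinarith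
      have : 0 ≤ ZSD * α * S / (1 + ZSD * (1 - α) * S) := by positivity
      linarith
    · exact mul_nonneg ht0 hL.le
    · exact mul_nonneg ht0 hc3.le
    · -- x2 ≤ t * capC (ZRD * S)
      apply mul_le_mul_of_nonneg_left _ ht0
      rw [hLdef2]
      unfold capC
      apply Real.log_le_log hr0
      rw [hrdef]
      have h2 : 0 < 1 + ZSD * S := by nlinarith
      have : ZRD * S / (1 + ZSD * S) ≤ ZRD * S := by
        rw [div_le_iff₀ h2]; nlinarith [mul_pos (mul_pos hZRD hS) (mul_pos hZSD hS)]
      linarith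
    · exact le_refl _
    · rw [show t * L + t * c3 = t * (L + c3) by ring]
      apply mul_le_mul_of_nonneg_left _ ht0
      rw [← hCsumdef]; linarith [hLval]
    · intro h; exfalso; linarith
    · intro _
      constructor
      · exact le_refl _
      · rw [h1α]
        have : capC (ρ - 1) = e * L := by
          unfold capC; rw [show 1 + (ρ - 1) = ρ by ring, hlogρ]
        rw [this, hedef]
        rw [show (1 - t) * (t / (1 - t) * L) = t * L * ((1-t)/(1-t)) by ring,
          div_self (ne_of_gt ht1p), mul_one]
  · -- sum = Fform
    unfold Fform
    have hD : 1 + (ZSD / ZSR) * (ρ - 1) = 1 + ZSD * (1 - α) * S := by rw [h1αZSD]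
    have hDpos : 0 < 1 + ZSD * (1 - α) * S := by nlinarith
    have hx1 : capC (ZSD * α * S / (1 + ZSD * (1 - α) * S))
        = Real.log ((1 + ZSD * S) / (1 + ZSD * (1 - α) * S)) := by
      unfold capC
      congr 1
      rw [eq_div_iff hDpos.ne', add_mul, div_mul_cancel₀ _ hDpos.ne']; ring
    rw [hx1, ← hrdef, ← hedef, ← hρdef, hD, ← hCsumdef]
    have hsum : L + c3 = Csum := by linarith [hLval]
    linear_combination t * hsum
include hZSD hZ hZRD hS in
lemma Fform_zero : Fform ZSD ZSR ZRD S 0 = capC (ZSD * S) := by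
  unfold Fform capC
  norm_num

include hZSD hZ hZRD hS in
lemma upper (t2max : ℝ)
    (ht2max : t2max = capC (ZSR * S) /
      (capC (ZSR * S) + capC ((ZSD + ZRD) * S) - capC (ZSD * S)))
    (t1 t2 α x1 x2 x3 : ℝ)
    (hfeas : Feasible ZSD ZSR ZRD S t1 t2 α x1 x2 x3) :
    ∃ t ∈ Set.Icc (0:ℝ) t2max, x1 + x2 + x3 ≤ Fform ZSD ZSR ZRD S t := by
  have ha : (1:ℝ) < 1 + ZSD * S := by nlinarith
  have hane : (1:ℝ) + ZSD * S ≠ 0 := by linarith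
  set r : ℝ := 1 + ZRD * S / (1 + ZSD * S) with hrdef
  set cS : ℝ := capC (ZSR * S) with hcSdef
  set L : ℝ := Real.log r with hLdef2
  set c3 : ℝ := capC (ZSD * S) with hc3def
  set Csum : ℝ := capC ((ZSD + ZRD) * S) with hCsumdef
  have hLval : Csum - c3 = L := L_eq ZSD ZSR ZRD S hZSD hZ hZRD hS
  have hL : 0 < L := L_pos ZSD ZSR ZRD S hZSD hZ hZRD hS
  have hcS : 0 < cS := cS_pos ZSD ZSR ZRD S hZSD hZ hZRD hS
  have hc3 : 0 < c3 := Real.log_pos (by nlinarith)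
  have hc3cS : c3 < cS := by
    rw [hc3def, hcSdef]; unfold capC
    apply Real.log_lt_log (by linarith); nlinarith
  have hr1 : (1 : ℝ) < r := by
    have : 0 < ZRD * S / (1 + ZSD * S) := by positivity
    rw [hrdef]; linarith
  have hr0 : (0 : ℝ) < r := by linarith
  have htm : t2max = cS / (cS + L) := by rw [ht2max, ← hLval]; ring_nf
  have htm0 : 0 < t2max := by rw [htm]; positivity
  have htm1 : t2max < 1 := by rw [htm, div_lt_one (by linarith)]; linarith
  have htmrel : (1 - t2max) * cS = t2max * L := by
    rw [htm]; field_simp; ring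
  have hZSRpos : 0 < ZSR := by linarith
  have hZSRne : ZSR ≠ 0 := ne_of_gt hZSRpos
  -- Fform at t2max
  have hFtm : Fform ZSD ZSR ZRD S t2max = t2max * Csum := by
    have hexp : t2max / (1 - t2max) = cS / L := by
      rw [div_eq_div_iff (by linarith) (by linarith)]; linarith [htmrel]
    have hrexp : r ^ (t2max / (1 - t2max)) = 1 + ZSR * S := by
      rw [hexp, Real.rpow_def_of_pos hr0, ← hLdef2,
        mul_div_cancel₀ _ (ne_of_gt hL), hcSdef]
      unfold capC
      exact Real.exp_log (by nlinarith)
    unfold Fform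
    rw [← hrdef, ← hCsumdef, hrexp]
    have hD : 1 + ZSD / ZSR * (1 + ZSR * S - 1) = 1 + ZSD * S := by
      field_simp; ring
    rw [hD, div_self hane, Real.log_one, mul_zero, zero_add]
  obtain ⟨ht1, ht2, hsum, hα0, hα1, hx1n, hx2n, hx3n, hx2RD, hx3c, h23, _, hbr⟩ := hfeas
  obtain ⟨hx1b, hx2b⟩ := hbr hZ
  rw [← hc3def] at hx3c
  rw [← hCsumdef] at h23
  rcases eq_or_lt_of_le ht1 with ht1z | ht1pos
  · -- t1 = 0
    refine ⟨0, ⟨le_refl _, htm0.le⟩, ?_⟩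
    rw [Fform_zero ZSD ZSR ZRD S hZSD hZ hZRD hS, ← hc3def]
    have ht21 : t2 = 1 := by linarith
    have hx1z : x1 ≤ 0 := by rw [← ht1z] at hx1b; simpa using hx1b
    have hx2z : x2 ≤ 0 := by rw [← ht1z] at hx2b; simpa using hx2b
    have : x3 ≤ c3 := by rw [ht21] at hx3c; linarith
    linarith
  · -- t1 > 0
    have ht1eq : t1 = 1 - t2 := by linarith
    have h1α : (0:ℝ) ≤ 1 - α := by linarith
    have hvpos : (0:ℝ) < 1 + ZSD * (1 - α) * S := by
      nlinarith [mul_nonneg (mul_nonneg hZSD.le h1α) hS.le]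
    have hwpos : (0:ℝ) < 1 + ZSR * (1 - α) * S := by
      nlinarith [mul_nonneg (mul_nonneg hZSRpos.le h1α) hS.le]
    set A : ℝ := Real.log (1 + ZSR * (1 - α) * S) with hAdef
    set B : ℝ := Real.log ((1 + ZSD * S) / (1 + ZSD * (1 - α) * S)) with hBdef
    have hx2A : x2 ≤ t1 * A := by
      rw [hAdef]; exact hx2b
    have hx1B : x1 ≤ t1 * B := by
      have : capC (ZSD * α * S / (1 + ZSD * (1 - α) * S)) = B := by
        rw [hBdef]; unfold capC; congr 1
        field_simp; ring
      rw [← this]; exact hx1b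
    have hA0 : 0 ≤ A := Real.log_nonneg (by
      nlinarith [mul_nonneg (mul_nonneg hZSRpos.le h1α) hS.le])
    have hAcS : A ≤ cS := by
      rw [hAdef, hcSdef]; unfold capC
      apply Real.log_le_log hwpos
      nlinarith [mul_nonneg (mul_nonneg hZSRpos.le hα0) hS.le]
    have hBA : B + A ≤ cS := by
      rw [hBdef, hAdef, hcSdef]; unfold capC
      rw [Real.log_div hane (ne_of_gt hvpos)]
      rw [← sub_nonneg]
      have h1 : Real.log (1 + ZSR * S) + Real.log (1 + ZSD * (1 - α) * S)
          = Real.log ((1 + ZSR * S) * (1 + ZSD * (1 - α) * S)) :=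
        (Real.log_mul (by nlinarith) (ne_of_gt hvpos)).symm
      have h2 : Real.log (1 + ZSD * S) + Real.log (1 + ZSR * (1 - α) * S)
          = Real.log ((1 + ZSD * S) * (1 + ZSR * (1 - α) * S)) :=
        (Real.log_mul hane (ne_of_gt hwpos)).symm
      have key : 0 ≤ (ZSR - ZSD) * S * α :=
        mul_nonneg (mul_nonneg (sub_nonneg.2 hZ.le) hS.le) hα0
      have h3 : (1 + ZSD * S) * (1 + ZSR * (1 - α) * S)
          ≤ (1 + ZSR * S) * (1 + ZSD * (1 - α) * S) := by
        nlinarith only [key]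
      have h4 := Real.log_le_log (mul_pos (by linarith) hwpos) h3
      linarith only [h1, h2, h4]
    by_cases hcase : t2 * L ≤ t1 * A
    · -- Case I : t2 ≤ t2max, bound by Fform t2
      have ht2m : t2 ≤ t2max := by
        have h1 : t2 * L ≤ t1 * cS :=
          le_trans hcase (mul_le_mul_of_nonneg_left hAcS ht1)
        rw [htm, le_div_iff₀ (by linarith)]
        rw [ht1eq] at h1
        nlinarith only [h1, ht2, hcS]
      refine ⟨t2, ⟨ht2, ht2m⟩, ?_⟩
      set ρ : ℝ := r ^ (t2 / (1 - t2)) with hρdef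
      have hρexp : ρ = Real.exp (L * (t2 / (1 - t2))) := Real.rpow_def_of_pos hr0 _
      have hρ1 : 1 ≤ ρ := by
        rw [hρexp]
        calc (1:ℝ) = Real.exp 0 := by simp
        _ ≤ _ := Real.exp_le_exp.2 (by
            have h0 : 0 ≤ t2 / (1 - t2) := div_nonneg ht2 (by linarith)
            exact mul_nonneg hL.le h0)
      have hρw : ρ ≤ 1 + ZSR * (1 - α) * S := by
        rw [hρexp]
        have h1 : L * (t2 / (1 - t2)) ≤ A := by
          rw [mul_div_assoc', div_le_iff₀ (by linarith : (0:ℝ) < 1 - t2)]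
          rw [ht1eq] at hcase
          calc L * t2 = t2 * L := by ring
          _ ≤ (1 - t2) * A := hcase
          _ = A * (1 - t2) := by ring
        calc Real.exp (L * (t2 / (1 - t2))) ≤ Real.exp A := Real.exp_le_exp.2 h1
        _ = 1 + ZSR * (1 - α) * S := by rw [hAdef, Real.exp_log hwpos]
      have hD1 : (1:ℝ) ≤ 1 + ZSD / ZSR * (ρ - 1) := by
        have : 0 ≤ ZSD / ZSR * (ρ - 1) := by
          apply mul_nonneg (by positivity); linarith
        linarith
      have hDv : 1 + ZSD / ZSR * (ρ - 1) ≤ 1 + ZSD * (1 - α) * S := by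
        have h1 : ZSD / ZSR * (ρ - 1) ≤ ZSD / ZSR * (ZSR * (1 - α) * S) := by
          apply mul_le_mul_of_nonneg_left _ (by positivity)
          linarith
        have h2 : ZSD / ZSR * (ZSR * (1 - α) * S) = ZSD * (1 - α) * S := by
          field_simp
        linarith [h1, h2.le]
      have hBD : B ≤ Real.log ((1 + ZSD * S) / (1 + ZSD / ZSR * (ρ - 1))) := by
        rw [hBdef]
        apply Real.log_le_log (by positivity)
        gcongr
        all_goals linarith
      unfold Fform
      rw [← hrdef, ← hρdef, ← hCsumdef]
      have hrate : x1 + x2 + x3 ≤ t1 * B + t2 * Csum := by linarith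
      have : t1 * B ≤ (1 - t2) * Real.log ((1 + ZSD * S) / (1 + ZSD / ZSR * (ρ - 1))) := by
        rw [ht1eq]
        apply mul_le_mul_of_nonneg_left hBD (by linarith)
      linarith
    · push_neg at hcase
      by_cases ht2m : t2 ≤ t2max
      · -- Case IIa: bound by Fform t2
        refine ⟨t2, ⟨ht2, ht2m⟩, ?_⟩
        set ρ : ℝ := r ^ (t2 / (1 - t2)) with hρdef
        have ht2lt1 : t2 < 1 := by linarith
        have hρexp : ρ = Real.exp (L * (t2 / (1 - t2))) := Real.rpow_def_of_pos hr0 _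
        have hwρ : 1 + ZSR * (1 - α) * S ≤ ρ := by
          rw [hρexp]
          have h1 : A ≤ L * (t2 / (1 - t2)) := by
            rw [mul_div_assoc', le_div_iff₀ (by linarith : (0:ℝ) < 1 - t2)]
            rw [ht1eq] at hcase
            calc A * (1 - t2) = (1 - t2) * A := by ring
            _ ≤ t2 * L := hcase.le
            _ = L * t2 := by ring
          calc 1 + ZSR * (1 - α) * S = Real.exp A := by rw [hAdef, Real.exp_log hwpos]
          _ ≤ _ := Real.exp_le_exp.2 h1
        have hw0 : 0 ≤ ZSR * (1 - α) * S := mul_nonneg (mul_nonneg hZSRpos.le h1α) hS.le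
        have hρ1 : (1:ℝ) ≤ ρ := by linarith
        have hρ0 : (0:ℝ) < ρ := by linarith
        have hk1 : ZSD / ZSR < 1 := (div_lt_one hZSRpos).2 hZ
        have hk0 : 0 < ZSD / ZSR := div_pos hZSD hZSRpos
        have hDpos : (0:ℝ) < 1 + ZSD / ZSR * (ρ - 1) := by
          have h0 : 0 ≤ ZSD / ZSR * (ρ - 1) := mul_nonneg hk0.le (by linarith)
          linarith
        have key2 : 0 ≤ (1 - ZSD / ZSR) * (ρ - (1 + ZSR * (1 - α) * S)) :=
          mul_nonneg (by linarith) (by linarith)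
        have key : (1 + ZSD / ZSR * (ρ - 1)) * (1 + ZSR * (1 - α) * S)
            ≤ ρ * (1 + ZSD / ZSR * (ZSR * (1 - α) * S)) := by nlinarith only [key2]
        have hveq : ZSD / ZSR * (ZSR * (1 - α) * S) = ZSD * (1 - α) * S := by
          field_simp
        rw [hveq] at key
        have hlog := Real.log_le_log (mul_pos hDpos hwpos) key
        rw [Real.log_mul (ne_of_gt hDpos) (ne_of_gt hwpos),
          Real.log_mul (ne_of_gt hρ0) (ne_of_gt hvpos)] at hlog
        have hlogρ : Real.log ρ = L * (t2 / (1 - t2)) := by rw [hρexp, Real.log_exp]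
        have ht1logρ : t1 * Real.log ρ = t2 * L := by
          rw [hlogρ, ht1eq, mul_comm, mul_assoc,
            div_mul_cancel₀ _ (by linarith : (1:ℝ) - t2 ≠ 0), mul_comm]
        have hB' : t1 * B = t1 * Real.log (1 + ZSD * S)
            - t1 * Real.log (1 + ZSD * (1 - α) * S) := by
          rw [hBdef, Real.log_div hane (ne_of_gt hvpos)]; ring
        have hA' : A = Real.log (1 + ZSR * (1 - α) * S) := hAdef
        have hmul := mul_le_mul_of_nonneg_left hlog (le_of_lt ht1pos)
        unfold Fform
        rw [← hrdef, ← hρdef, ← hCsumdef,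
          Real.log_div hane (ne_of_gt hDpos), ← ht1eq]
        have hsplit : t2 * L + t2 * c3 = t2 * Csum := by
          linear_combination (-t2) * hLval
        nlinarith only [hx1B, hx2A, hx3c, hmul, ht1logρ, hB', hA', hsplit,
          mul_le_mul_of_nonneg_left hA'.le (le_of_lt ht1pos),
          mul_le_mul_of_nonneg_left hA'.ge (le_of_lt ht1pos)]
      · push_neg at ht2m
        refine ⟨t2max, ⟨htm0.le, le_refl _⟩, ?_⟩
        rw [hFtm]
        have h2 : t1 * B + t1 * A ≤ t1 * cS := by
          have h0 := mul_le_mul_of_nonneg_left hBA (le_of_lt ht1pos)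
          nlinarith only [h0]
        have h1 : x1 + x2 + x3 ≤ t1 * cS + t2 * c3 := by
          linarith only [hx1B, hx2A, hx3c, h2]
        have hint : 0 ≤ (t2 - t2max) * (cS - c3) :=
          mul_nonneg (by linarith) (by linarith)
        have h3 : t1 * cS + t2 * c3 ≤ (1 - t2max) * cS + t2max * c3 := by
          rw [ht1eq]
          nlinarith only [hint]
        have h4 : (1 - t2max) * cS + t2max * c3 = t2max * Csum := by
          linear_combination htmrel - t2max * hLval
        linarith only [h1, h3, h4]
include hZSD hZ hZRD hS in
lemma Fform_contOn (t2max : ℝ)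
    (ht2max : t2max = capC (ZSR * S) /
      (capC (ZSR * S) + capC ((ZSD + ZRD) * S) - capC (ZSD * S))) :
    ContinuousOn (Fform ZSD ZSR ZRD S) (Set.Icc 0 t2max) := by
  have ha : (1:ℝ) < 1 + ZSD * S := by nlinarith
  set r : ℝ := 1 + ZRD * S / (1 + ZSD * S) with hrdef
  have hr1 : (1 : ℝ) < r := by
    have : 0 < ZRD * S / (1 + ZSD * S) := by positivity
    rw [hrdef]; linarith
  have hr0 : (0 : ℝ) < r := by linarith
  have hLr : 0 < Real.log r := Real.log_pos hr1
  have hL : 0 < Real.log r := hLr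
  have hcS : 0 < capC (ZSR * S) := cS_pos ZSD ZSR ZRD S hZSD hZ hZRD hS
  have hLval : capC ((ZSD + ZRD) * S) - capC (ZSD * S) = Real.log r :=
    L_eq ZSD ZSR ZRD S hZSD hZ hZRD hS
  have htm : t2max = capC (ZSR * S) / (capC (ZSR * S) + Real.log r) := by
    rw [ht2max, ← hLval]; ring_nf
  have htm1 : t2max < 1 := by
    rw [htm, div_lt_one (by linarith)]; linarith
  have hk0 : 0 < ZSD / ZSR := div_pos hZSD (by linarith)
  -- facts on the set
  have hset : ∀ t ∈ Set.Icc (0:ℝ) t2max, 0 < 1 - t ∧ 0 ≤ t / (1 - t) := by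
    intro t ht
    have h1 : 0 < 1 - t := by
      have := ht.2; linarith
    exact ⟨h1, div_nonneg ht.1 h1.le⟩
  have hg : ContinuousOn (fun t : ℝ => (1 - t) * Real.log ((1 + ZSD * S) /
      (1 + (ZSD / ZSR) * (Real.exp (Real.log r * (t / (1 - t))) - 1)))
      + t * capC ((ZSD + ZRD) * S)) (Set.Icc 0 t2max) := by
    have hc1 : ContinuousOn (fun t : ℝ => t / (1 - t)) (Set.Icc 0 t2max) := by
      apply ContinuousOn.div continuousOn_id
        ((continuous_const.sub continuous_id).continuousOn)
      intro t ht
      exact ne_of_gt (hset t ht).1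
    have hcexp : ContinuousOn
        (fun t : ℝ => Real.exp (Real.log r * (t / (1 - t)))) (Set.Icc 0 t2max) :=
      Real.continuous_exp.comp_continuousOn (continuousOn_const.mul hc1)
    have hden : ContinuousOn
        (fun t : ℝ => 1 + (ZSD / ZSR) * (Real.exp (Real.log r * (t / (1 - t))) - 1))
        (Set.Icc 0 t2max) :=
      continuousOn_const.add (continuousOn_const.mul (hcexp.sub continuousOn_const))
    have hdenpos : ∀ t ∈ Set.Icc (0:ℝ) t2max,
        0 < 1 + (ZSD / ZSR) * (Real.exp (Real.log r * (t / (1 - t))) - 1) := by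
      intro t ht
      have h1 : (1:ℝ) ≤ Real.exp (Real.log r * (t / (1 - t))) :=
        Real.one_le_exp (mul_nonneg hLr.le (hset t ht).2)
      have h2 : 0 ≤ (ZSD / ZSR) * (Real.exp (Real.log r * (t / (1 - t))) - 1) :=
        mul_nonneg hk0.le (by linarith)
      linarith
    have hquot : ContinuousOn (fun t : ℝ => (1 + ZSD * S) /
        (1 + (ZSD / ZSR) * (Real.exp (Real.log r * (t / (1 - t))) - 1)))
        (Set.Icc 0 t2max) :=
      continuousOn_const.div hden (fun t ht => ne_of_gt (hdenpos t ht))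
    have hlog : ContinuousOn (fun t : ℝ => Real.log ((1 + ZSD * S) /
        (1 + (ZSD / ZSR) * (Real.exp (Real.log r * (t / (1 - t))) - 1))))
        (Set.Icc 0 t2max) := by
      apply ContinuousOn.log hquot
      intro t ht
      exact ne_of_gt (div_pos (by linarith) (hdenpos t ht))
    exact (((continuous_const.sub continuous_id).continuousOn).mul hlog).add
      ((continuous_id.continuousOn).mul continuousOn_const)
  apply hg.congr
  intro t ht
  unfold Fform
  rw [← hrdef, Real.rpow_def_of_pos hr0]

include hZSD hZ hZRD hS in
lemma t2max_pos (t2max : ℝ)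
    (ht2max : t2max = capC (ZSR * S) /
      (capC (ZSR * S) + capC ((ZSD + ZRD) * S) - capC (ZSD * S))) : 0 < t2max := by
  have hLval := L_eq ZSD ZSR ZRD S hZSD hZ hZRD hS
  have hL := L_pos ZSD ZSR ZRD S hZSD hZ hZRD hS
  have hcS := cS_pos ZSD ZSR ZRD S hZSD hZ hZRD hS
  have htm : t2max = capC (ZSR * S)
      / (capC (ZSR * S) + Real.log (1 + ZRD * S / (1 + ZSD * S))) := by
    rw [ht2max, ← hLval]; ring_nf
  rw [htm]
  positivity
end

/-- When `0 < Z_SD < Z_SR`, with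
`t2max = C(Z_SR·S)/(C(Z_SR·S) + C((Z_SD+Z_RD)·S) − C(Z_SD·S))` and
`F t2 = (1−t2)·log((1+Z_SD·S)/(1+(Z_SD/Z_SR)·[(1+Z_RD·S/(1+Z_SD·S))^(t2/(1−t2)) − 1]))
  + t2·C((Z_SD+Z_RD)·S)`,
the supremum of the achievable rate over all feasible tuples equals the maximum of
`F` over `t2 ∈ [0, t2max]`. -/
theorem sup_rate_eq_max_F
    (ZSD ZSR ZRD S : ℝ) (hZSD : 0 < ZSD) (hZ : ZSD < ZSR) (hZRD : 0 < ZRD)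
    (hS : 0 < S)
    (t2max : ℝ)
    (ht2max : t2max = capC (ZSR * S) /
      (capC (ZSR * S) + capC ((ZSD + ZRD) * S) - capC (ZSD * S)))
    (F : ℝ → ℝ)
    (hF : ∀ t2 : ℝ, F t2 =
      (1 - t2) * Real.log ((1 + ZSD * S) /
        (1 + (ZSD / ZSR) *
          ((1 + ZRD * S / (1 + ZSD * S)) ^ (t2 / (1 - t2)) - 1)))
      + t2 * capC ((ZSD + ZRD) * S)) :
    ∃ M : ℝ, IsGreatest (F '' Set.Icc 0 t2max) M ∧
      sSup {x : ℝ | ∃ t1 t2 α x1 x2 x3 : ℝ,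
          Feasible ZSD ZSR ZRD S t1 t2 α x1 x2 x3 ∧ x = x1 + x2 + x3} = M := by
  have hFeq : F = Fform ZSD ZSR ZRD S := by
    funext t; rw [hF t]; rfl
  subst hFeq
  have htm0 := t2max_pos ZSD ZSR ZRD S hZSD hZ hZRD hS t2max ht2max
  obtain ⟨tstar, htstar, hmax⟩ := isCompact_Icc.exists_isMaxOn
    (Set.nonempty_Icc.2 htm0.le)
    (Fform_contOn ZSD ZSR ZRD S hZSD hZ hZRD hS t2max ht2max)
  refine ⟨Fform ZSD ZSR ZRD S tstar, ⟨⟨tstar, htstar, rfl⟩, ?_⟩, ?_⟩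
  · rintro y ⟨t, ht, rfl⟩
    exact hmax ht
  · have hub : ∀ x ∈ {x : ℝ | ∃ t1 t2 α x1 x2 x3 : ℝ,
        Feasible ZSD ZSR ZRD S t1 t2 α x1 x2 x3 ∧ x = x1 + x2 + x3},
        x ≤ Fform ZSD ZSR ZRD S tstar := by
      rintro x ⟨t1, t2, α, x1, x2, x3, hfeas, rfl⟩
      obtain ⟨t, ht, hle⟩ := upper ZSD ZSR ZRD S hZSD hZ hZRD hS t2max ht2max
        t1 t2 α x1 x2 x3 hfeas
      exact le_trans hle (hmax ht)
    have hmem : Fform ZSD ZSR ZRD S tstar ∈ {x : ℝ | ∃ t1 t2 α x1 x2 x3 : ℝ,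
        Feasible ZSD ZSR ZRD S t1 t2 α x1 x2 x3 ∧ x = x1 + x2 + x3} := by
      obtain ⟨α, x1, x2, x3, hfeas, heq⟩ := construct ZSD ZSR ZRD S hZSD hZ hZRD hS
        t2max ht2max tstar htstar
      exact ⟨1 - tstar, tstar, α, x1, x2, x3, hfeas, heq.symm⟩
    exact le_antisymm (csSup_le ⟨_, hmem⟩ hub) (le_csSup ⟨_, hub⟩ hmem)
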